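/- Let ω > 0, T = 2π/ω, θ = arctan ω, Z(t) = sin(ωt - θ)/√(1+ω²), and let W be the T-periodic solution of W' = -W + f''(0)·Z². Then (1/T)∫₀ᵀ Z(t)³ dt = 0 and (1/T)∫₀ᵀ Z(t)·W(t) dt = 0. -/

import Mathlib

open Real Set Filter intervalIntegral

/-- Lemma 4.6 computation: the means of Z³ and Z·W vanish, where
Z(t) = sin(ωt-θ)/√(1+ω²) and W is the T-periodic solution of W' = -W + c Z². -/
theorem mean_Zcube_and_ZW_zero
    (ω T θ c : ℝ) (hω : 0 < ω) (hT : T = 2 * Real.pi / ω)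
    (hθ : θ = Real.arctan ω)
    (Z W : ℝ → ℝ)
    (hZ : ∀ t, Z t = Real.sin (ω * t - θ) / Real.sqrt (1 + ω ^ 2))
    (hWode : ∀ t, HasDerivAt W (-W t + c * (Z t) ^ 2) t)
    (hWper : ∀ t, W (t + T) = W t) :
    (1 / T) * (∫ t in (0:ℝ)..T, (Z t) ^ 3) = 0 ∧
    (1 / T) * (∫ t in (0:ℝ)..T, Z t * W t) = 0 := by
  have hs : (0:ℝ) < Real.sqrt (1 + ω ^ 2) := Real.sqrt_pos.2 (by positivity)
  set s := Real.sqrt (1 + ω ^ 2) with hsdef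
  have hsne : s ≠ 0 := ne_of_gt hs
  have hωne : ω ≠ 0 := ne_of_gt hω
  have hωT : ω * T = 2 * Real.pi := by rw [hT]; field_simp
  -- phase at T vs 0
  have hcosT : Real.cos (ω * T - θ) = Real.cos (ω * 0 - θ) := by
    have : ω * T - θ = (ω * 0 - θ) + 2 * Real.pi := by rw [hωT]; ring
    rw [this, Real.cos_add_two_pi]
  have hsinT : Real.sin (ω * T - θ) = Real.sin (ω * 0 - θ) := by
    have : ω * T - θ = (ω * 0 - θ) + 2 * Real.pi := by rw [hωT]; ring
    rw [this, Real.sin_add_two_pi]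
  -- basic derivatives
  have hφ : ∀ t : ℝ, HasDerivAt (fun t => ω * t - θ) ω t := by
    intro t
    simpa using ((hasDerivAt_id t).const_mul ω).sub_const θ
  have hZd : ∀ t : ℝ, HasDerivAt Z (ω * Real.cos (ω * t - θ) / s) t := by
    intro t
    have h1 : HasDerivAt (fun t => Real.sin (ω * t - θ)) (Real.cos (ω * t - θ) * ω) t :=
      (hφ t).sin
    have h2 := h1.div_const s
    have : Z = fun t => Real.sin (ω * t - θ) / s := funext hZ
    rw [this]
    simpa [mul_comm] using h2
  have hZc : Continuous Z := by
    have : Z = fun t => Real.sin (ω * t - θ) / s := funext hZ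
    rw [this]; fun_prop
  have hWc : Continuous W := by
    rw [continuous_iff_continuousAt]
    exact fun t => (hWode t).continuousAt
  have hZ'c : Continuous (fun t => ω * Real.cos (ω * t - θ) / s) := by fun_prop
  have hW'c : Continuous (fun t => -W t + c * (Z t) ^ 2) := by
    exact (hWc.neg).add ((continuous_const).mul (hZc.pow 2))
  -- Z and Z' are T-periodic
  have hZper : Z T = Z 0 := by rw [hZ T, hZ 0, hsinT]
  have hZ'per : ω * Real.cos (ω * T - θ) / s = ω * Real.cos (ω * 0 - θ) / s := by rw [hcosT]
  have hWT : W T = W 0 := by simpa using hWper 0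
  have hTpos : 0 < T := by rw [hT]; positivity
  -- ∫ Z^3 = 0 via explicit antiderivative
  have hZ3 : (∫ t in (0:ℝ)..T, (Z t) ^ 3) = 0 := by
    have hF : ∀ t : ℝ, HasDerivAt
        (fun t => ((Real.cos (ω * t - θ)) ^ 3 / 3 - Real.cos (ω * t - θ)) / (ω * s ^ 3))
        ((Z t) ^ 3) t := by
      intro t
      have hc : HasDerivAt (fun t => Real.cos (ω * t - θ)) (-Real.sin (ω * t - θ) * ω) t :=
        (hφ t).cos
      have h3 := (((hc.pow 3).div_const 3).sub hc).div_const (ω * s ^ 3)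
      refine h3.congr_deriv ?_
      have pyth := Real.sin_sq_add_cos_sq (ω * t - θ)
      rw [hZ t]
      field_simp
      linear_combination (-(3 * Real.sin (ω * t - θ))) * pyth
    have := intervalIntegral.integral_eq_sub_of_hasDerivAt (fun x _ => hF x)
      ((hZc.pow 3).intervalIntegrable 0 T)
    rw [this, hcosT]; ring
  -- ∫ Z' Z^2 = 0 via antiderivative Z^3/3
  have hZ'Z2 : (∫ t in (0:ℝ)..T, (ω * Real.cos (ω * t - θ) / s) * (Z t) ^ 2) = 0 := by
    have hG : ∀ t : ℝ, HasDerivAt (fun t => (Z t) ^ 3 / 3)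
        ((ω * Real.cos (ω * t - θ) / s) * (Z t) ^ 2) t := by
      intro t
      have := ((hZd t).pow 3).div_const 3
      refine this.congr_deriv ?_
      ring
    have := intervalIntegral.integral_eq_sub_of_hasDerivAt (fun x _ => hG x)
      ((hZ'c.mul (hZc.pow 2)).intervalIntegrable 0 T)
    rw [this, hZper]; ring
  -- integration by parts identities
  have hIBP1 : (∫ t in (0:ℝ)..T, Z t * (-W t + c * (Z t) ^ 2))
      = Z T * W T - Z 0 * W 0 - ∫ t in (0:ℝ)..T, (ω * Real.cos (ω * t - θ) / s) * W t := by
    exact intervalIntegral.integral_mul_deriv_eq_deriv_mul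
      (fun x _ => hZd x) (fun x _ => hWode x)
      (hZ'c.intervalIntegrable 0 T) (hW'c.intervalIntegrable 0 T)
  have hIBP2 : (∫ t in (0:ℝ)..T, (ω * Real.cos (ω * t - θ) / s) * (-W t + c * (Z t) ^ 2))
      = (ω * Real.cos (ω * T - θ) / s) * W T - (ω * Real.cos (ω * 0 - θ) / s) * W 0
        - ∫ t in (0:ℝ)..T, (-(ω ^ 2) * Z t) * W t := by
    refine intervalIntegral.integral_mul_deriv_eq_deriv_mul
      (fun x _ => ?_) (fun x _ => hWode x)
      (((continuous_const.mul hZc).intervalIntegrable 0 T)) (hW'c.intervalIntegrable 0 T)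
    have hc : HasDerivAt (fun t => Real.cos (ω * t - θ)) (-Real.sin (ω * x - θ) * ω) x :=
      (hφ x).cos
    have := (hc.const_mul ω).div_const s
    convert this using 1
    rw [hZ x]; field_simp
  -- expand the integrands
  have hsplit1 : (∫ t in (0:ℝ)..T, Z t * (-W t + c * (Z t) ^ 2))
      = -(∫ t in (0:ℝ)..T, Z t * W t) + c * (∫ t in (0:ℝ)..T, (Z t) ^ 3) := by
    rw [← intervalIntegral.integral_neg, ← intervalIntegral.integral_const_mul,
      ← intervalIntegral.integral_add (f := fun t => -(Z t * W t)) (g := fun t => c * Z t ^ 3)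
        ((hZc.mul hWc).neg.intervalIntegrable 0 T)
        ((continuous_const.mul (hZc.pow 3)).intervalIntegrable 0 T)]
    congr 1; funext t; ring
  have hsplit2 : (∫ t in (0:ℝ)..T, (ω * Real.cos (ω * t - θ) / s) * (-W t + c * (Z t) ^ 2))
      = -(∫ t in (0:ℝ)..T, (ω * Real.cos (ω * t - θ) / s) * W t)
        + c * (∫ t in (0:ℝ)..T, (ω * Real.cos (ω * t - θ) / s) * (Z t) ^ 2) := by
    rw [← intervalIntegral.integral_neg, ← intervalIntegral.integral_const_mul,
      ← intervalIntegral.integral_add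
        (f := fun t => -((ω * Real.cos (ω * t - θ) / s) * W t))
        (g := fun t => c * ((ω * Real.cos (ω * t - θ) / s) * Z t ^ 2))
        ((hZ'c.mul hWc).neg.intervalIntegrable 0 T)
        ((continuous_const.mul (hZ'c.mul (hZc.pow 2))).intervalIntegrable 0 T)]
    congr 1; funext t; ring
  have hsplit3 : (∫ t in (0:ℝ)..T, (-(ω ^ 2) * Z t) * W t)
      = -(ω ^ 2) * (∫ t in (0:ℝ)..T, Z t * W t) := by
    rw [← intervalIntegral.integral_const_mul]
    congr 1; funext t; ring
  set J := ∫ t in (0:ℝ)..T, Z t * W t with hJ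
  set K := ∫ t in (0:ℝ)..T, (ω * Real.cos (ω * t - θ) / s) * W t with hK
  have e1 := hIBP1
  rw [hsplit1, hZ3, hZper, hWT] at e1
  have e2 := hIBP2
  rw [hsplit2, hZ'Z2, hsplit3, hcosT, hWT] at e2
  have hJK : J = K := by linarith
  have hJ0 : J = 0 := by nlinarith [sq_nonneg ω]
  exact ⟨by rw [hZ3]; ring, by rw [hJ0]; ring⟩
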